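/- Let y ∈ ℝⁿ, G an n×m real matrix, σ > 0 and γ > 0. Define F(θ) = exp(-‖y - Gθ‖²/(2σ²)) · ∏_{i=1}^m ∫₀^∞ (2πλ)^{-1/2} exp(-θᵢ²/(2λ)) γ exp(-γλ) dλ for θ ∈ ℝ^m, and the Lasso objective L(θ) = ‖y - Gθ‖²/(2σ²) + √(2γ) · Σ_{i=1}^m |θᵢ|. Then for all θ, θ' ∈ ℝ^m one has F(θ) ≥ F(θ') if and only if L(θ) ≤ L(θ'). In particular the maximizers of the marginal density F coincide with the Lasso minimizers with regularization parameter γ_L = √(2γ). -/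

import Mathlib

open MeasureTheory Matrix

open Real Set

lemma glasser {α β : ℝ} (hα : 0 < α) (hβ : 0 ≤ β) :
    ∫ u in Ioi (0:ℝ), Real.exp (-(α * u - β / u) ^ 2) = Real.sqrt Real.pi / (2 * α) := by
  rcases eq_or_lt_of_le hβ with rfl | hβ
  · have hcg : ∀ u ∈ Ioi (0:ℝ), Real.exp (-(α * u - 0 / u) ^ 2)
        = Real.exp (-(α^2) * u^2) := by
      intro u hu; rw [zero_div, sub_zero, mul_pow]; ring_nf
    rw [setIntegral_congr_fun measurableSet_Ioi hcg, integral_gaussian_Ioi,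
      Real.sqrt_div pi_nonneg, Real.sqrt_sq hα.le]
    ring
  · set f : ℝ → ℝ := fun u => α * u - β / u with hfdef
    set f' : ℝ → ℝ := fun u => α + β / u ^ 2 with hf'def
    have hderiv : ∀ x ∈ Ioi (0:ℝ), HasDerivWithinAt f (f' x) (Ioi 0) x := by
      intro x hx
      have hx0 : x ≠ 0 := ne_of_gt hx
      have h1 : HasDerivAt (fun u : ℝ => α * u - β * u⁻¹)
          (α * 1 - β * (-(x^2)⁻¹)) x :=
        ((hasDerivAt_id x).const_mul α).sub ((hasDerivAt_inv hx0).const_mul β)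
      have e1 : (fun u : ℝ => α * u - β * u⁻¹) = f := by
        funext u; simp [hfdef, div_eq_mul_inv]
      have e2 : α * 1 - β * (-(x^2)⁻¹) = f' x := by
        simp only [hf'def]; field_simp; ring
      rw [e1, e2] at h1
      exact h1.hasDerivWithinAt
    have hmono : StrictMonoOn f (Ioi 0) := by
      intro x hx z hz hxz
      have hx0 : (0:ℝ) < x := hx
      have hz0 : (0:ℝ) < z := hz
      have h2 : β / z < β / x := div_lt_div_of_pos_left hβ hx0 hxz
      have h1 : α * x < α * z := by nlinarith
      simp only [hfdef]
      linarith
    have hinj : InjOn f (Ioi 0) := hmono.injOn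
    have himg : f '' Ioi 0 = univ := by
      apply eq_univ_of_forall
      intro w
      set s := Real.sqrt (w^2 + 4*α*β) with hs
      have hs2 : s^2 = w^2 + 4*α*β := Real.sq_sqrt (by positivity)
      have hsw : |w| < s := by
        rw [← Real.sqrt_sq_eq_abs]
        exact Real.sqrt_lt_sqrt (sq_nonneg w) (by nlinarith)
      have hws : 0 < w + s := by
        have := neg_abs_le w
        linarith
      have hu : 0 < (w + s) / (2 * α) := by positivity
      refine ⟨(w + s) / (2 * α), hu, ?_⟩
      show α * ((w + s) / (2 * α)) - β / ((w + s) / (2 * α)) = w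
      field_simp
      nlinarith [hs2]
    have hcv := integral_image_eq_integral_abs_deriv_smul measurableSet_Ioi hderiv hinj
        (fun w => Real.exp (-w^2))
    rw [himg, Measure.restrict_univ] at hcv
    have hg : ∫ w : ℝ, Real.exp (-w^2) = Real.sqrt Real.pi := by
      have := integral_gaussian 1
      simpa using this
    have hEmeas : Measurable fun u : ℝ => Real.exp (-(f u)^2) := by
      simp only [hfdef]; fun_prop
    have hint : IntegrableOn (fun u => |f' u| • Real.exp (-(f u)^2)) (Ioi 0) := by
      have h : Integrable (fun w : ℝ => Real.exp (-w^2)) := by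
        have := integrable_exp_neg_mul_sq (by norm_num : (0:ℝ) < 1)
        simpa using this
      exact (integrableOn_image_iff_integrableOn_abs_deriv_smul measurableSet_Ioi hderiv hinj
        (fun w => Real.exp (-w^2))).mp (by rw [himg]; exact h.integrableOn)
    have hf'pos : ∀ u ∈ Ioi (0:ℝ), 0 < f' u := by
      intro u hu
      have hu0 : (0:ℝ) < u := hu
      have : 0 ≤ β / u^2 := by positivity
      simp only [hf'def]; linarith
    have hi1 : IntegrableOn (fun u => α * Real.exp (-(f u)^2)) (Ioi 0) := by
      refine hint.mono' ?_ ?_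
      · exact (hEmeas.const_mul α).aestronglyMeasurable
      · filter_upwards [self_mem_ae_restrict measurableSet_Ioi] with u hu
        have hE0 : 0 < Real.exp (-(f u)^2) := Real.exp_pos _
        rw [smul_eq_mul, Real.norm_eq_abs, abs_of_pos (by positivity)]
        have : α ≤ |f' u| := by
          rw [abs_of_pos (hf'pos u hu)]
          have hu0 : (0:ℝ) < u := hu
          have : 0 ≤ β / u^2 := by positivity
          simp only [hf'def]; linarith
        exact mul_le_mul_of_nonneg_right this hE0.le
    have hi2 : IntegrableOn (fun u => (β/u^2) * Real.exp (-(f u)^2)) (Ioi 0) := by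
      refine hint.mono' ?_ ?_
      · exact ((measurable_const.div (measurable_id.pow_const 2)).mul hEmeas).aestronglyMeasurable
      · filter_upwards [self_mem_ae_restrict measurableSet_Ioi] with u hu
        have hu0 : (0:ℝ) < u := hu
        have hE0 : 0 < Real.exp (-(f u)^2) := Real.exp_pos _
        rw [smul_eq_mul, Real.norm_eq_abs, abs_of_nonneg (by positivity)]
        have : β / u^2 ≤ |f' u| := by
          rw [abs_of_pos (hf'pos u hu)]
          simp only [hf'def]; linarith
        exact mul_le_mul_of_nonneg_right this hE0.le
    have hsplit : ∫ u in Ioi (0:ℝ), |f' u| • Real.exp (-(f u)^2)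
        = (∫ u in Ioi (0:ℝ), α * Real.exp (-(f u)^2))
          + ∫ u in Ioi (0:ℝ), (β/u^2) * Real.exp (-(f u)^2) := by
      rw [← integral_add hi1 hi2]
      apply setIntegral_congr_fun measurableSet_Ioi
      intro u hu
      have hu0 : (0:ℝ) < u := hu
      dsimp only
      rw [smul_eq_mul, abs_of_pos (hf'pos u hu)]
      simp only [hf'def]; ring
    have hrefl : ∫ u in Ioi (0:ℝ), (β/u^2) * Real.exp (-(f u)^2)
        = ∫ u in Ioi (0:ℝ), α * Real.exp (-(f u)^2) := by
      set g2 : ℝ → ℝ := fun u => (β/α) * u⁻¹ with hg2def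
      have hba : 0 < β / α := by positivity
      have hderiv2 : ∀ x ∈ Ioi (0:ℝ), HasDerivWithinAt g2 ((β/α) * (-(x^2)⁻¹)) (Ioi 0) x := by
        intro x hx
        exact ((hasDerivAt_inv (ne_of_gt hx)).const_mul (β/α)).hasDerivWithinAt
      have hinj2 : InjOn g2 (Ioi 0) := by
        intro x hx z hz h
        have := mul_left_cancel₀ (ne_of_gt hba) h
        exact inv_injective this
      have himg2 : g2 '' Ioi 0 = Ioi 0 := by
        ext w
        constructor
        · rintro ⟨u, hu, rfl⟩
          have hu0 : (0:ℝ) < u := hu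
          have : 0 < (β/α) * u⁻¹ := by positivity
          exact this
        · intro hw
          have hw0 : (0:ℝ) < w := hw
          refine ⟨(β/α) * w⁻¹, mem_Ioi.mpr (by positivity), ?_⟩
          simp only [hg2def]
          field_simp
      have hcv2 := integral_image_eq_integral_abs_deriv_smul measurableSet_Ioi hderiv2 hinj2
          (fun u => α * Real.exp (-(f u)^2))
      rw [himg2] at hcv2
      rw [hcv2]
      apply setIntegral_congr_fun measurableSet_Ioi
      intro u hu
      have hu0 : (0:ℝ) < u := hu
      have hfg : f (g2 u) = -(f u) := by
        simp only [hg2def, hfdef]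
        field_simp
        ring
      have hneg : (β/α) * (-(u^2)⁻¹) < 0 := by
        have h1 : 0 < (u^2)⁻¹ := by positivity
        nlinarith
      dsimp only
      rw [smul_eq_mul, hfg, neg_sq, abs_of_neg hneg]
      field_simp
    have hJ : Real.sqrt Real.pi = 2 * α * ∫ u in Ioi (0:ℝ), Real.exp (-(f u)^2) := by
      rw [← hg, hcv, hsplit, hrefl, integral_const_mul]
      ring
    have heq : ∫ u in Ioi (0:ℝ), Real.exp (-(α*u - β/u)^2)
        = ∫ u in Ioi (0:ℝ), Real.exp (-(f u)^2) := rfl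
    rw [heq, eq_div_iff (by positivity : (2*α) ≠ 0)]
    linarith [hJ]

lemma key_integral {γ : ℝ} (hγ : 0 < γ) (a : ℝ) :
    ∫ l in Ioi (0:ℝ), (2 * Real.pi * l) ^ (-(1:ℝ)/2) * Real.exp (-a ^ 2 / (2 * l)) *
        (γ * Real.exp (-γ * l))
      = Real.sqrt (γ/2) * Real.exp (-Real.sqrt (2*γ) * |a|) := by
  have hπ : (0:ℝ) < Real.pi := Real.pi_pos
  set b := |a| / Real.sqrt 2 with hbdef
  have hs2 : Real.sqrt 2 ^ 2 = 2 := Real.sq_sqrt (by norm_num)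
  have hs2p : (0:ℝ) < Real.sqrt 2 := by positivity
  have hsg : Real.sqrt γ ^ 2 = γ := Real.sq_sqrt hγ.le
  have hsgp : (0:ℝ) < Real.sqrt γ := Real.sqrt_pos.mpr hγ
  have hb0 : 0 ≤ b := by positivity
  have hsq : Real.sqrt (2*γ) = Real.sqrt 2 * Real.sqrt γ := Real.sqrt_mul (by norm_num) γ
  -- step 1: pull out constants
  have h1 : ∫ l in Ioi (0:ℝ), (2 * Real.pi * l) ^ (-(1:ℝ)/2) * Real.exp (-a ^ 2 / (2 * l)) *
        (γ * Real.exp (-γ * l))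
      = (2*Real.pi) ^ (-(1:ℝ)/2) * γ *
          ∫ l in Ioi (0:ℝ), l ^ (-(1:ℝ)/2) * Real.exp (-(a^2/(2*l) + γ*l)) := by
    rw [← integral_const_mul]
    apply setIntegral_congr_fun measurableSet_Ioi
    intro l hl
    have hl0 : (0:ℝ) < l := hl
    have he : Real.exp (-(a^2/(2*l) + γ*l)) = Real.exp (-a^2/(2*l)) * Real.exp (-γ*l) := by
      rw [← Real.exp_add]; ring_nf
    dsimp only
    rw [Real.mul_rpow (by positivity) hl0.le, he]
    ring
  -- step 2: substitution l = u^2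
  have hsub := integral_comp_rpow_Ioi_of_pos
    (g := fun l : ℝ => l ^ (-(1:ℝ)/2) * Real.exp (-(a^2/(2*l) + γ*l))) (p := 2) two_pos
  have h2 : ∫ x in Ioi (0:ℝ), ((2:ℝ) * x ^ ((2:ℝ)-1)) •
        ((x ^ (2:ℝ)) ^ (-(1:ℝ)/2) * Real.exp (-(a^2/(2*(x ^ (2:ℝ))) + γ*(x ^ (2:ℝ)))))
      = ∫ x in Ioi (0:ℝ), Real.exp (-(Real.sqrt (2*γ)*|a|)) *
          (2 * Real.exp (-(Real.sqrt γ * x - b/x)^2)) := by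
    apply setIntegral_congr_fun measurableSet_Ioi
    intro u hu
    have hu0 : (0:ℝ) < u := hu
    have e1 : u ^ (2:ℝ) = u^2 := by
      rw [show (2:ℝ) = ((2:ℕ):ℝ) by norm_num, Real.rpow_natCast]
    have e2 : (u^2 : ℝ) ^ (-(1:ℝ)/2) = u⁻¹ := by
      rw [← Real.rpow_natCast u 2, ← Real.rpow_mul hu0.le]
      norm_num [Real.rpow_neg_one]
    have e3 : u ^ ((2:ℝ)-1) = u := by norm_num
    have hY : b^2 = a^2/2 := by
      rw [hbdef, div_pow, hs2, sq_abs]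
    have hXY : 2 * (Real.sqrt γ * u) * (b/u) = Real.sqrt (2*γ) * |a| := by
      rw [hbdef, hsq]
      field_simp
      linear_combination (-|a|) * hs2
    have hexpand : (Real.sqrt γ * u - b/u)^2
        = γ*u^2 - Real.sqrt (2*γ)*|a| + a^2/(2*u^2) := by
      have : (Real.sqrt γ * u - b/u)^2
          = (Real.sqrt γ*u)^2 - 2*(Real.sqrt γ*u)*(b/u) + (b/u)^2 := by ring
      rw [this, hXY, mul_pow, hsg, div_pow, hY]
      field_simp
    have eexp : -(a^2/(2*u^2) + γ*u^2)
        = -(Real.sqrt γ * u - b/u)^2 + -(Real.sqrt (2*γ)*|a|) := by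
      rw [hexpand]; ring
    dsimp only
    rw [e1, e2, e3, smul_eq_mul, eexp, Real.exp_add]
    field_simp
  have hglass := glasser hsgp hb0
  -- assemble
  rw [h1, ← hsub, h2, integral_const_mul, integral_const_mul, hglass]
  rw [show -Real.sqrt (2*γ) * |a| = -(Real.sqrt (2*γ) * |a|) by ring]
  have hrp : (2*Real.pi) ^ (-(1:ℝ)/2) = (Real.sqrt (2*Real.pi))⁻¹ := by
    rw [show (-(1:ℝ)/2) = -(1/2 : ℝ) by norm_num, Real.rpow_neg (by positivity),
      ← Real.sqrt_eq_rpow]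
  rw [hrp]
  have hsπ : Real.sqrt (2*Real.pi) = Real.sqrt 2 * Real.sqrt Real.pi :=
    Real.sqrt_mul (by norm_num) _
  have hsγ2 : Real.sqrt (γ/2) = Real.sqrt γ / Real.sqrt 2 := Real.sqrt_div hγ.le 2
  have hsπp : (0:ℝ) < Real.sqrt Real.pi := Real.sqrt_pos.mpr hπ
  rw [hsπ, hsγ2, hsq]
  field_simp
  linear_combination (-1 : ℝ) * hsg

/-- The marginal density `F` of the hierarchical Bayesian model and the Lasso objective `L`
are related by: `F θ ≥ F θ'` iff `L θ ≤ L θ'`; in particular the maximizers of `F`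
coincide with the Lasso minimizers with regularization parameter `√(2γ)`. -/
theorem stmt_1 (n m : ℕ) (y : Fin n → ℝ) (G : Matrix (Fin n) (Fin m) ℝ) (σ γ : ℝ)
    (hσ : 0 < σ) (hγ : 0 < γ)
    (F L : (Fin m → ℝ) → ℝ)
    (hF : ∀ θ, F θ =
      Real.exp (-(∑ i, (y i - G.mulVec θ i) ^ 2) / (2 * σ ^ 2)) *
        ∏ i, ∫ l in Set.Ioi (0 : ℝ),
          (2 * Real.pi * l) ^ (-(1 : ℝ) / 2) * Real.exp (-(θ i) ^ 2 / (2 * l)) *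
            (γ * Real.exp (-γ * l)))
    (hL : ∀ θ, L θ =
      (∑ i, (y i - G.mulVec θ i) ^ 2) / (2 * σ ^ 2) + Real.sqrt (2 * γ) * ∑ i, |θ i|) :
    (∀ θ θ' : Fin m → ℝ, F θ ≥ F θ' ↔ L θ ≤ L θ') ∧
      (∀ θ : Fin m → ℝ, (∀ θ', F θ' ≤ F θ) ↔ (∀ θ', L θ ≤ L θ')) := by
  have hc : (0:ℝ) < Real.sqrt (γ/2) ^ m := by positivity
  have hFe : ∀ θ : Fin m → ℝ, F θ = Real.sqrt (γ/2) ^ m * Real.exp (-(L θ)) := by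
    intro θ
    rw [hF, hL]
    have hkey : ∀ i : Fin m, (∫ l in Set.Ioi (0:ℝ),
          (2 * Real.pi * l) ^ (-(1 : ℝ) / 2) * Real.exp (-(θ i) ^ 2 / (2 * l)) *
            (γ * Real.exp (-γ * l)))
        = Real.sqrt (γ/2) * Real.exp (-Real.sqrt (2*γ) * |θ i|) :=
      fun i => key_integral hγ (θ i)
    rw [Finset.prod_congr rfl (fun i _ => hkey i), Finset.prod_mul_distrib,
      Finset.prod_const, Finset.card_univ, Fintype.card_fin, ← Real.exp_sum]
    rw [show (∑ i, -Real.sqrt (2*γ) * |θ i|) = -(Real.sqrt (2*γ) * ∑ i, |θ i|) by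
      rw [← Finset.mul_sum, neg_mul]]
    rw [show Real.exp (-(∑ i, (y i - G.mulVec θ i) ^ 2) / (2 * σ ^ 2)) *
        (Real.sqrt (γ/2) ^ m * Real.exp (-(Real.sqrt (2*γ) * ∑ i, |θ i|)))
      = Real.sqrt (γ/2) ^ m * (Real.exp (-(∑ i, (y i - G.mulVec θ i) ^ 2) / (2 * σ ^ 2)) *
          Real.exp (-(Real.sqrt (2*γ) * ∑ i, |θ i|))) by ring]
    rw [← Real.exp_add]
    have hexp : (-(∑ i, (y i - G.mulVec θ i) ^ 2) / (2 * σ ^ 2)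
          + -(Real.sqrt (2*γ) * ∑ i, |θ i|))
        = -((∑ i, (y i - G.mulVec θ i) ^ 2) / (2 * σ ^ 2)
          + Real.sqrt (2 * γ) * ∑ i, |θ i|) := by
      ring
    rw [hexp]
  have hiff : ∀ θ θ' : Fin m → ℝ, F θ ≥ F θ' ↔ L θ ≤ L θ' := by
    intro θ θ'
    rw [hFe θ, hFe θ', ge_iff_le, mul_le_mul_iff_right₀ hc, Real.exp_le_exp, neg_le_neg_iff]
  exact ⟨hiff, fun θ => forall_congr' fun θ' => hiff θ θ'⟩
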